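/- QMAM approximate-to-exact gap: let ρ* ∈ D(A⊗X⊗Y), σ* ∈ D(X), c ∈ [0,1], 0 < Δ ≤ 1, and suppose the SDP optimum α = max{⟨R,ρ⟩ : tr_Y(ρ) ≤ (1/2)I_A ⊗ σ, ρ ∈ D(A⊗X⊗Y), σ ∈ D(X)} satisfies α ≤ c − Δ/2. Then for every (ρ,σ) the quantity max{c − ⟨R,ρ⟩, 0} + (1/2)‖tr_Y(ρ) − (1/2)I_A ⊗ σ‖₁ is at least Δ²/8. -/

import Mathlib

open Matrix Kronecker ComplexOrder
noncomputable section

/-- Hilbert–Schmidt inner product (real part): `⟨A,B⟩ = Re tr(Aᴴ B)`. -/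
def ip {n : Type*} [Fintype n] (A B : Matrix n n ℂ) : ℝ := ((Aᴴ * B).trace).re

/-- density operator -/
def IsDensity {n : Type*} [Fintype n] [DecidableEq n] (ρ : Matrix n n ℂ) : Prop :=
  ρ.PosSemidef ∧ ρ.trace = 1

/-- the former `Matrix.PosSemidef.sqrt` (removed from Mathlib), with its old definition -/
def psdSqrt {n : Type*} [Fintype n] [DecidableEq n] {A : Matrix n n ℂ} (hA : A.PosSemidef) :
    Matrix n n ℂ :=
  (hA.1.eigenvectorUnitary : Matrix n n ℂ) * diagonal ((↑) ∘ Real.sqrt ∘ hA.1.eigenvalues) *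
    (star hA.1.eigenvectorUnitary : Matrix n n ℂ)

/-- trace norm `‖A‖₁ = tr √(AᴴA)` -/
def traceNorm {n : Type*} [Fintype n] [DecidableEq n] (A : Matrix n n ℂ) : ℝ :=
  (psdSqrt (Matrix.posSemidef_conjTranspose_mul_self A)).trace.re

open Classical in
/-- square root of a positive semidefinite matrix (junk value `0` otherwise) -/
def msqrt {n : Type*} [Fintype n] [DecidableEq n] (A : Matrix n n ℂ) : Matrix n n ℂ :=
  if h : A.PosSemidef then psdSqrt h else 0

/-- fidelity `F(P,Q) = ‖√P √Q‖₁` -/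
def fidelity {n : Type*} [Fintype n] [DecidableEq n] (P Q : Matrix n n ℂ) : ℝ :=
  traceNorm (msqrt P * msqrt Q)

/-- partial trace over the second tensor factor -/
def ptraceRight {n m : Type*} [Fintype m] (M : Matrix (n × m) (n × m) ℂ) :
    Matrix n n ℂ := Matrix.of fun i j => ∑ k, M (i, k) (j, k)

/-- partial trace over the first tensor factor -/
def ptraceLeft {n m : Type*} [Fintype n] (M : Matrix (n × m) (n × m) ℂ) :
    Matrix m m ℂ := Matrix.of fun i j => ∑ k, M (k, i) (k, j)

/-- `0 ≤ Π ≤ I` -/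
def Meas {n : Type*} [Fintype n] [DecidableEq n] (P : Matrix n n ℂ) : Prop :=
  P.PosSemidef ∧ (1 - P).PosSemidef

section PsdSqrtAux
open scoped MatrixOrder
variable {n : Type*} [Fintype n] [DecidableEq n]

private lemma psdSqrt_eq_cfcSqrt {A : Matrix n n ℂ} (hA : A.PosSemidef) :
    psdSqrt hA = CFC.sqrt A := by
  rw [CFC.sqrt_eq_real_sqrt A hA.nonneg, cfcₙ_eq_cfc (hf0 := Real.sqrt_zero), hA.1.cfc_eq,
    IsHermitian.cfc, Unitary.conjStarAlgAut_apply]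
  rfl

private lemma psdSqrt_mul_self {A : Matrix n n ℂ} (hA : A.PosSemidef) :
    psdSqrt hA * psdSqrt hA = A := by
  rw [psdSqrt_eq_cfcSqrt]; exact CFC.sqrt_mul_sqrt_self A hA.nonneg

private lemma posSemidef_psdSqrt {A : Matrix n n ℂ} (hA : A.PosSemidef) :
    (psdSqrt hA).PosSemidef := by
  rw [psdSqrt_eq_cfcSqrt]; exact (CFC.sqrt_nonneg A).posSemidef

private lemma eq_psdSqrt_of_sq_eq {A Q : Matrix n n ℂ} (hQ : Q.PosSemidef) (hA : A.PosSemidef)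
    (h : Q ^ 2 = A) : Q = psdSqrt hA := by
  rw [psdSqrt_eq_cfcSqrt]; exact (CFC.sqrt_unique (by rw [← pow_two, h]) hQ.nonneg).symm

end PsdSqrtAux

section AuxLemmas
set_option linter.unusedSectionVars false
variable {n m : Type*} [Fintype n] [Fintype m] [DecidableEq n] [DecidableEq m]

private lemma psd_diag_nonneg {M : Matrix n n ℂ} (hM : M.PosSemidef) (i : n) : 0 ≤ M i i := by
  have := hM.dotProduct_mulVec_nonneg (Pi.single i 1)
  simpa [dotProduct, Matrix.mulVec, Pi.single_apply, Finset.mul_sum] using this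

private lemma psd_trace_nonneg {M : Matrix n n ℂ} (hM : M.PosSemidef) : 0 ≤ M.trace :=
  Finset.sum_nonneg fun i _ => psd_diag_nonneg hM i

private lemma psd_trace_re {M : Matrix n n ℂ} (hM : M.PosSemidef) :
    M.trace = (M.trace.re : ℂ) := by
  have h := psd_trace_nonneg hM
  rw [Complex.le_def] at h
  exact Complex.ext rfl (by simpa using h.2.symm)

private lemma psd_trace_re_nonneg {M : Matrix n n ℂ} (hM : M.PosSemidef) : 0 ≤ M.trace.re := by
  have h := psd_trace_nonneg hM
  rw [Complex.le_def] at h; exact h.1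

private lemma ip_add' (R A B : Matrix n n ℂ) : ip R (A + B) = ip R A + ip R B := by
  simp [ip, Matrix.mul_add, Matrix.trace_add]

private lemma ip_sub' (R A B : Matrix n n ℂ) : ip R (A - B) = ip R A - ip R B := by
  simp [ip, Matrix.mul_sub, Matrix.trace_sub]

private lemma ip_smul_real (R : Matrix n n ℂ) (r : ℝ) (A : Matrix n n ℂ) :
    ip R ((r : ℂ) • A) = r * ip R A := by
  simp [ip, Matrix.mul_smul, Matrix.trace_smul, Complex.mul_re]

private lemma ip_nonneg {R A : Matrix n n ℂ} (hR : R.PosSemidef) (hA : A.PosSemidef) :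
    0 ≤ ip R A := by
  have hB : A = psdSqrt hA * psdSqrt hA := (psdSqrt_mul_self hA).symm
  have h1 : (Rᴴ * A).trace = ((psdSqrt hA)ᴴ * R * psdSqrt hA).trace := by
    rw [hR.1.eq, (posSemidef_psdSqrt hA).1.eq]
    conv_lhs => rw [hB]
    rw [← Matrix.mul_assoc, Matrix.trace_mul_comm, ← Matrix.mul_assoc]
  have h2 : ((psdSqrt hA)ᴴ * R * psdSqrt hA).PosSemidef := hR.conjTranspose_mul_mul_same _
  rw [ip, h1]
  exact psd_trace_re_nonneg h2

private lemma ip_le_trace {R A : Matrix n n ℂ} (hR1 : (1 - R).PosSemidef)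
    (hA : A.PosSemidef) : ip R A ≤ A.trace.re := by
  have h := ip_nonneg hR1 hA
  have h2 : ip (1 - R) A = A.trace.re - ip R A := by
    simp [ip, Matrix.conjTranspose_sub, Matrix.sub_mul, Matrix.trace_sub]
  linarith [h2 ▸ h]

private lemma psd_smul_real {M : Matrix n n ℂ} (hM : M.PosSemidef) {r : ℝ} (hr : 0 ≤ r) :
    ((r : ℂ) • M).PosSemidef := by
  refine Matrix.PosSemidef.of_dotProduct_mulVec_nonneg ?_ ?_
  · unfold Matrix.IsHermitian
    rw [Matrix.conjTranspose_smul, hM.1.eq]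
    simp [Complex.star_def, Complex.conj_ofReal]
  · intro x
    rw [Matrix.smul_mulVec, dotProduct_smul]
    exact smul_nonneg (by exact_mod_cast hr) (hM.dotProduct_mulVec_nonneg x)

private lemma ptraceRight_trace (M : Matrix (n × m) (n × m) ℂ) :
    (ptraceRight M).trace = M.trace := by
  simp [ptraceRight, Matrix.trace, Matrix.diag, Fintype.sum_prod_type]

private lemma ptraceLeft_trace (M : Matrix (n × m) (n × m) ℂ) :
    (ptraceLeft M).trace = M.trace := by
  rw [Matrix.trace, Matrix.trace, Fintype.sum_prod_type, Finset.sum_comm]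
  simp [ptraceLeft, Matrix.diag]

private lemma ptraceRight_add (A B : Matrix (n × m) (n × m) ℂ) :
    ptraceRight (A + B) = ptraceRight A + ptraceRight B := by
  ext i j; simp [ptraceRight, Finset.sum_add_distrib]

private lemma ptraceRight_smul (c : ℂ) (A : Matrix (n × m) (n × m) ℂ) :
    ptraceRight (c • A) = c • ptraceRight A := by
  ext i j; simp [ptraceRight, Finset.mul_sum]

private lemma ptraceRight_kronecker (A : Matrix n n ℂ) (B : Matrix m m ℂ) :
    ptraceRight (A ⊗ₖ B) = B.trace • A := by
  ext i j
  simp [ptraceRight, Matrix.trace, Matrix.diag, Matrix.kroneckerMap_apply, ← Finset.mul_sum,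
    mul_comm]

private lemma ptraceRight_herm {M : Matrix (n × m) (n × m) ℂ} (hM : M.IsHermitian) :
    (ptraceRight M).IsHermitian := by
  unfold Matrix.IsHermitian
  ext i j
  rw [Matrix.conjTranspose_apply]
  simp only [ptraceRight, Matrix.of_apply, star_sum]
  exact Finset.sum_congr rfl fun k _ => by rw [← Matrix.conjTranspose_apply, hM.eq]

private lemma ptraceLeft_psd {M : Matrix (n × m) (n × m) ℂ} (hM : M.PosSemidef) :
    (ptraceLeft M).PosSemidef := by
  refine Matrix.PosSemidef.of_dotProduct_mulVec_nonneg ?_ ?_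
  · unfold Matrix.IsHermitian
    ext i j
    rw [Matrix.conjTranspose_apply]
    simp only [ptraceLeft, Matrix.of_apply, star_sum]
    exact Finset.sum_congr rfl fun a _ => by rw [← Matrix.conjTranspose_apply, hM.1.eq]
  · intro v
    have key : star v ⬝ᵥ (ptraceLeft M).mulVec v
        = ∑ a : n, star (fun p : n × m => if p.1 = a then v p.2 else 0) ⬝ᵥ
            M.mulVec (fun p : n × m => if p.1 = a then v p.2 else 0) := by
      simp only [dotProduct, Matrix.mulVec, ptraceLeft, Matrix.of_apply,
        Fintype.sum_prod_type, Pi.star_apply, apply_ite (star : ℂ → ℂ), star_zero, ite_mul,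
        mul_ite, zero_mul, mul_zero, Finset.sum_ite_irrel, Finset.sum_const_zero,
        Finset.sum_ite_eq', Finset.mem_univ, if_true, Finset.mul_sum, Finset.sum_mul]
      have reorder : ∀ f : n → m → m → ℂ,
          ∑ x : m, ∑ y : m, ∑ i : n, f i x y = ∑ i : n, ∑ x : m, ∑ y : m, f i x y := by
        intro f
        calc ∑ x : m, ∑ y : m, ∑ i : n, f i x y
            = ∑ x : m, ∑ i : n, ∑ y : m, f i x y :=
              Finset.sum_congr rfl fun x _ => Finset.sum_comm
          _ = ∑ i : n, ∑ x : m, ∑ y : m, f i x y := Finset.sum_comm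
      exact reorder fun i x y => star (v x) * (M (i, x) (i, y) * v y)
    rw [key]
    exact Finset.sum_nonneg fun a _ => hM.dotProduct_mulVec_nonneg _

private lemma kron_conjTranspose (A : Matrix n n ℂ) (B : Matrix m m ℂ) :
    (A ⊗ₖ B)ᴴ = Aᴴ ⊗ₖ Bᴴ := by
  ext ⟨i, k⟩ ⟨j, l⟩
  simp [Matrix.conjTranspose_apply, Matrix.kroneckerMap_apply]

private lemma kron_one_psd {A : Matrix n n ℂ} (hA : A.PosSemidef) :
    (A ⊗ₖ (1 : Matrix m m ℂ)).PosSemidef := by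
  refine Matrix.PosSemidef.of_dotProduct_mulVec_nonneg ?_ ?_
  · rw [Matrix.IsHermitian, kron_conjTranspose, hA.1.eq, Matrix.conjTranspose_one]
  · intro v
    have key : star v ⬝ᵥ (A ⊗ₖ (1 : Matrix m m ℂ)).mulVec v
        = ∑ k : m, star (fun i : n => v (i, k)) ⬝ᵥ A.mulVec (fun i => v (i, k)) := by
      simp only [dotProduct, Matrix.mulVec, Matrix.kroneckerMap_apply, Matrix.one_apply,
        Fintype.sum_prod_type, Pi.star_apply, mul_ite, ite_mul, mul_one, mul_zero, zero_mul,
        one_mul, Finset.sum_ite_irrel, Finset.sum_const_zero, Finset.sum_ite_eq',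
        Finset.sum_ite_eq, Finset.mem_univ, if_true, Finset.mul_sum, Finset.sum_mul]
      exact Finset.sum_comm
    rw [key]
    exact Finset.sum_nonneg fun k _ => hA.dotProduct_mulVec_nonneg _

private lemma two_kron_ptraceLeft_sub_psd {P : Matrix (Fin 2 × m) (Fin 2 × m) ℂ}
    (hP : P.PosSemidef) :
    ((2 : ℂ) • ((1 : Matrix (Fin 2) (Fin 2) ℂ) ⊗ₖ ptraceLeft P) - P).PosSemidef := by
  have hB : (ptraceLeft P).PosSemidef := ptraceLeft_psd hP
  refine Matrix.PosSemidef.of_dotProduct_mulVec_nonneg ?_ ?_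
  · refine Matrix.IsHermitian.sub ?_ hP.1
    rw [Matrix.IsHermitian, Matrix.conjTranspose_smul, kron_conjTranspose,
      Matrix.conjTranspose_one, hB.1.eq]
    norm_num
  · intro v
    set y : Fin 2 → Fin 2 → (Fin 2 × m → ℂ) :=
      fun a b => fun p => if p.1 = b then v (a, p.2) else 0 with hy
    set q : (Fin 2 × m → ℂ) → ℂ := fun w => star w ⬝ᵥ P.mulVec w with hq
    have key : star v ⬝ᵥ (((1 : Matrix (Fin 2) (Fin 2) ℂ) ⊗ₖ ptraceLeft P).mulVec v)
        = ∑ a : Fin 2, ∑ b : Fin 2, q (y a b) := by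
      simp only [hq, hy, dotProduct, Matrix.mulVec, Matrix.kroneckerMap_apply,
        Matrix.one_apply, ptraceLeft, Matrix.of_apply, Fintype.sum_prod_type, Pi.star_apply,
        apply_ite (star : ℂ → ℂ), star_zero, mul_ite, ite_mul, mul_one, mul_zero, zero_mul,
        one_mul, Finset.sum_ite_irrel, Finset.sum_const_zero, Finset.sum_ite_eq',
        Finset.sum_ite_eq, Finset.mem_univ, if_true, Finset.mul_sum, Finset.sum_mul]
      refine Finset.sum_congr rfl fun x _ => ?_
      calc (∑ x1 : m, ∑ x2 : m, ∑ x3 : Fin 2, star (v (x, x1)) * (P (x3, x1) (x3, x2) * v (x, x2)))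
          = ∑ x1 : m, ∑ x3 : Fin 2, ∑ x2 : m, star (v (x, x1)) * (P (x3, x1) (x3, x2) * v (x, x2)) :=
            Finset.sum_congr rfl fun x1 _ => Finset.sum_comm
        _ = ∑ x3 : Fin 2, ∑ x1 : m, ∑ x2 : m, star (v (x, x1)) * (P (x3, x1) (x3, x2) * v (x, x2)) :=
            Finset.sum_comm
    have hsplit : v = y 0 0 + y 1 1 := by
      funext p
      rcases p with ⟨c, i⟩
      fin_cases c <;> simp [hy]
    have hcross : q (y 0 0 + y 1 1) ≤ 2 * (q (y 0 0) + q (y 1 1)) := by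
      have hexp : ∀ x z : Fin 2 × m → ℂ, q (x + z)
          = q x + q z + (star x ⬝ᵥ P.mulVec z + star z ⬝ᵥ P.mulVec x) := by
        intro x z
        simp only [hq, star_add, Matrix.mulVec_add, add_dotProduct,
          dotProduct_add]
        ring
      have hsub : (0 : ℂ) ≤ q (y 0 0 - y 1 1) := hP.dotProduct_mulVec_nonneg _
      have hexp2 : q (y 0 0 - y 1 1)
          = q (y 0 0) + q (y 1 1) - (star (y 0 0) ⬝ᵥ P.mulVec (y 1 1)
            + star (y 1 1) ⬝ᵥ P.mulVec (y 0 0)) := by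
        simp only [hq, star_sub, Matrix.mulVec_sub, sub_dotProduct,
          dotProduct_sub]
        ring
      have h1 : star (y 0 0) ⬝ᵥ P.mulVec (y 1 1) + star (y 1 1) ⬝ᵥ P.mulVec (y 0 0)
          ≤ q (y 0 0) + q (y 1 1) := by
        rw [hexp2] at hsub
        exact sub_nonneg.mp hsub
      rw [hexp]
      calc q (y 0 0) + q (y 1 1) + (star (y 0 0) ⬝ᵥ P.mulVec (y 1 1)
            + star (y 1 1) ⬝ᵥ P.mulVec (y 0 0))
          ≤ q (y 0 0) + q (y 1 1) + (q (y 0 0) + q (y 1 1)) := add_le_add_right h1 _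
        _ = 2 * (q (y 0 0) + q (y 1 1)) := by ring
    have hsum : q (y 0 0) + q (y 1 1) ≤ ∑ a : Fin 2, ∑ b : Fin 2, q (y a b) := by
      rw [Fin.sum_univ_two, Fin.sum_univ_two, Fin.sum_univ_two]
      have h01 : (0 : ℂ) ≤ q (y 0 1) := hP.dotProduct_mulVec_nonneg _
      have h10 : (0 : ℂ) ≤ q (y 1 0) := hP.dotProduct_mulVec_nonneg _
      calc q (y 0 0) + q (y 1 1) ≤ (q (y 0 0) + q (y 0 1)) + (q (y 1 0) + q (y 1 1)) := by
            have := add_le_add (add_le_add_right h01 (q (y 0 0)))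
              (add_le_add_left h10 (q (y 1 1)))
            simpa using this
        _ = q (y 0 0) + q (y 0 1) + (q (y 1 0) + q (y 1 1)) := by ring
    have expand : star v ⬝ᵥ
        (((2 : ℂ) • ((1 : Matrix (Fin 2) (Fin 2) ℂ) ⊗ₖ ptraceLeft P) - P).mulVec v)
        = 2 * (∑ a : Fin 2, ∑ b : Fin 2, q (y a b)) - q v := by
      rw [Matrix.sub_mulVec, Matrix.smul_mulVec, dotProduct_sub,
        dotProduct_smul, key]
      simp [hq, smul_eq_mul]
    rw [expand]
    have hqv : q v ≤ 2 * (∑ a : Fin 2, ∑ b : Fin 2, q (y a b)) := by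
      calc q v = q (y 0 0 + y 1 1) := by rw [← hsplit]
        _ ≤ 2 * (q (y 0 0) + q (y 1 1)) := hcross
        _ ≤ 2 * (∑ a : Fin 2, ∑ b : Fin 2, q (y a b)) :=
            mul_le_mul_of_nonneg_left hsum (by norm_num)
    exact sub_nonneg.mpr hqv

private lemma herm_decomp {k : Type*} [Fintype k] [DecidableEq k] {M : Matrix k k ℂ}
    (hM : M.IsHermitian) :
    ∃ P N : Matrix k k ℂ, P.PosSemidef ∧ N.PosSemidef ∧ M = P - N ∧
      traceNorm M = P.trace.re + N.trace.re := by
  set U : Matrix k k ℂ := (hM.eigenvectorUnitary : Matrix k k ℂ) with hUdef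
  have hUU : Uᴴ * U = 1 := by
    rw [← Matrix.star_eq_conjTranspose]
    exact (Matrix.mem_unitaryGroup_iff').mp hM.eigenvectorUnitary.2
  set lam := hM.eigenvalues with hlam
  set P : Matrix k k ℂ := U * Matrix.diagonal (fun i => ((max (lam i) 0 : ℝ) : ℂ)) * Uᴴ with hPdef
  set N : Matrix k k ℂ := U * Matrix.diagonal (fun i => ((max (-lam i) 0 : ℝ) : ℂ)) * Uᴴ with hNdef
  set Q : Matrix k k ℂ := U * Matrix.diagonal (fun i => ((|lam i| : ℝ) : ℂ)) * Uᴴ with hQdef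
  have hdiagP : (Matrix.diagonal (fun i => ((max (lam i) 0 : ℝ) : ℂ))).PosSemidef :=
    Matrix.PosSemidef.diagonal fun i => by positivity
  have hdiagN : (Matrix.diagonal (fun i => ((max (-lam i) 0 : ℝ) : ℂ))).PosSemidef :=
    Matrix.PosSemidef.diagonal fun i => by positivity
  have hdiagQ : (Matrix.diagonal (fun i => ((|lam i| : ℝ) : ℂ))).PosSemidef :=
    Matrix.PosSemidef.diagonal fun i => by positivity
  have hP : P.PosSemidef := hdiagP.mul_mul_conjTranspose_same U
  have hN : N.PosSemidef := hdiagN.mul_mul_conjTranspose_same U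
  have hQ : Q.PosSemidef := hdiagQ.mul_mul_conjTranspose_same U
  have hspec : M = U * Matrix.diagonal (fun i => ((lam i : ℝ) : ℂ)) * Uᴴ := by
    have := hM.spectral_theorem; rw [Unitary.conjStarAlgAut_apply] at this
    rw [← Matrix.star_eq_conjTranspose]
    exact this
  have key : ∀ d e : k → ℝ, (U * Matrix.diagonal (fun i => ((d i : ℝ) : ℂ)) * Uᴴ) *
      (U * Matrix.diagonal (fun i => ((e i : ℝ) : ℂ)) * Uᴴ)
      = U * Matrix.diagonal (fun i => ((d i * e i : ℝ) : ℂ)) * Uᴴ := by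
    intro d e
    calc (U * Matrix.diagonal (fun i => ((d i : ℝ) : ℂ)) * Uᴴ) *
          (U * Matrix.diagonal (fun i => ((e i : ℝ) : ℂ)) * Uᴴ)
        = U * (Matrix.diagonal (fun i => ((d i : ℝ) : ℂ)) * (Uᴴ * U) *
            Matrix.diagonal (fun i => ((e i : ℝ) : ℂ))) * Uᴴ := by
          simp only [Matrix.mul_assoc]
      _ = U * Matrix.diagonal (fun i => ((d i * e i : ℝ) : ℂ)) * Uᴴ := by
          rw [hUU, Matrix.mul_one, Matrix.diagonal_mul_diagonal]
          congr 2
          funext i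
          push_cast
          ring
  have hMPN : M = P - N := by
    have hfun : (fun i => ((max (lam i) 0 : ℝ) : ℂ) - ((max (-lam i) 0 : ℝ) : ℂ))
        = fun i => ((lam i : ℝ) : ℂ) := by
      funext i
      rw [← Complex.ofReal_sub, max_zero_sub_max_neg_zero_eq_self]
    rw [hPdef, hNdef, ← Matrix.sub_mul, ← Matrix.mul_sub, Matrix.diagonal_sub, hfun, ← hspec]
  have hQsq : Q ^ 2 = Mᴴ * M := by
    rw [hM.eq, hspec, hQdef, pow_two, key, key]
    have habs : (fun i => ((|lam i| * |lam i| : ℝ) : ℂ)) = fun i => ((lam i * lam i : ℝ) : ℂ) := by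
      funext i
      rw [abs_mul_abs_self]
    rw [habs]
  have hQeq : Q = psdSqrt (Matrix.posSemidef_conjTranspose_mul_self M) :=
    eq_psdSqrt_of_sq_eq hQ _ hQsq
  have traceUDU : ∀ d : k → ℝ, (U * Matrix.diagonal (fun i => ((d i : ℝ) : ℂ)) * Uᴴ).trace
      = ((∑ i, d i : ℝ) : ℂ) := by
    intro d
    rw [Matrix.trace_mul_cycle, hUU, Matrix.one_mul, Matrix.trace_diagonal]
    push_cast
    rfl
  refine ⟨P, N, hP, hN, hMPN, ?_⟩
  rw [traceNorm, ← hQeq, hQdef, hPdef, hNdef, traceUDU, traceUDU, traceUDU,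
    Complex.ofReal_re, Complex.ofReal_re, Complex.ofReal_re, ← Finset.sum_add_distrib]
  refine Finset.sum_congr rfl fun i _ => ?_
  rcases le_total 0 (lam i) with h | h
  · rw [abs_of_nonneg h, max_eq_left h, max_eq_right (neg_nonpos.mpr h), add_zero]
  · rw [abs_of_nonpos h, max_eq_right h, max_eq_left (neg_nonneg.mpr h), zero_add]

end AuxLemmas

set_option maxHeartbeats 1000000 in
/-- QMAM approximate-to-exact gap: if the QMAM SDP optimum is at most `c - Δ/2`,
then for every `(ρ, σ)` the approximate-feasibility functional is at least `Δ²/8`. -/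
theorem stmt18 {xd yd : ℕ}
    (R : Matrix ((Fin 2 × Fin xd) × Fin yd) ((Fin 2 × Fin xd) × Fin yd) ℂ)
    (hR : Meas R) (c Δ : ℝ) (hc0 : 0 ≤ c) (hc1 : c ≤ 1)
    (hΔ0 : 0 < Δ) (hΔ1 : Δ ≤ 1)
    (hopt : ∀ (ρ : Matrix ((Fin 2 × Fin xd) × Fin yd) ((Fin 2 × Fin xd) × Fin yd) ℂ)
        (σ : Matrix (Fin xd) (Fin xd) ℂ), IsDensity ρ → IsDensity σ →
        ((1 / 2 : ℂ) • ((1 : Matrix (Fin 2) (Fin 2) ℂ) ⊗ₖ σ) - ptraceRight ρ).PosSemidef →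
        ip R ρ ≤ c - Δ / 2) :
    ∀ (ρ : Matrix ((Fin 2 × Fin xd) × Fin yd) ((Fin 2 × Fin xd) × Fin yd) ℂ)
      (σ : Matrix (Fin xd) (Fin xd) ℂ), IsDensity ρ → IsDensity σ →
      Δ ^ 2 / 8 ≤ max (c - ip R ρ) 0 +
        traceNorm (ptraceRight ρ - (1 / 2 : ℂ) • ((1 : Matrix (Fin 2) (Fin 2) ℂ) ⊗ₖ σ)) / 2 := by
  intro ρ σ hρ hσ
  by_cases hyd0 : yd = 0
  · exfalso
    have h0 : ρ.trace = 0 := by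
      subst hyd0
      simp [Matrix.trace]
    rw [hρ.2] at h0
    exact one_ne_zero h0
  set τ : Matrix (Fin 2 × Fin xd) (Fin 2 × Fin xd) ℂ := ptraceRight ρ with hτdef
  set K : Matrix (Fin 2 × Fin xd) (Fin 2 × Fin xd) ℂ :=
    (1 : Matrix (Fin 2) (Fin 2) ℂ) ⊗ₖ σ with hKdef
  set M0 := τ - (1/2 : ℂ) • K with hM0def
  have hτtr : τ.trace = 1 := by rw [hτdef, ptraceRight_trace, hρ.2]
  have hKtr : K.trace = 2 := by
    rw [hKdef, Matrix.trace_kronecker, hσ.2, Matrix.trace_one]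
    norm_num
  have hM0tr : M0.trace = 0 := by
    rw [hM0def, Matrix.trace_sub, Matrix.trace_smul, hτtr, hKtr, smul_eq_mul]
    norm_num
  have hKh : K.IsHermitian := by
    rw [hKdef, Matrix.IsHermitian, kron_conjTranspose, Matrix.conjTranspose_one, hσ.1.1.eq]
  have hM0h : M0.IsHermitian := by
    refine (ptraceRight_herm hρ.1.1).sub ?_
    rw [Matrix.IsHermitian, Matrix.conjTranspose_smul, hKh.eq]
    norm_num
  obtain ⟨P, N, hP, hN, hPN, htn⟩ := herm_decomp hM0h
  set a := P.trace.re with hadef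
  have ha0 : 0 ≤ a := psd_trace_re_nonneg hP
  have hNa : N.trace.re = a := by
    have h0 : P.trace - N.trace = 0 := by rw [← Matrix.trace_sub, ← hPN, hM0tr]
    have h1 := congrArg Complex.re h0
    simp only [Complex.sub_re, Complex.zero_re] at h1
    rw [hadef]
    linarith
  have htn2 : traceNorm M0 = 2 * a := by rw [htn, hNa]; ring
  rw [htn2]
  have h2a : (2:ℝ) * a / 2 = a := by ring
  rw [h2a]
  rcases le_or_gt (Δ^2/8) a with hcase | hcase
  · have := le_max_right (c - ip R ρ) (0:ℝ)
    linarith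
  -- main construction
  have h4a : (0:ℝ) < 1 + 4*a := by linarith
  set r0 : ℝ := (1 + 4*a)⁻¹ with hr0def
  have hr0pos : 0 < r0 := inv_pos.mpr h4a
  have hr0mul : r0 * (1 + 4*a) = 1 := inv_mul_cancel₀ (ne_of_gt h4a)
  have hr0le : r0 ≤ 1 := by nlinarith [mul_nonneg ha0 hr0pos.le]
  have hPtr : P.trace = (a:ℂ) := psd_trace_re hP
  set PB := ptraceLeft P with hPBdef
  have hPB : PB.PosSemidef := ptraceLeft_psd hP
  have hPBtr : PB.trace = (a:ℂ) := by rw [hPBdef, ptraceLeft_trace, hPtr]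
  set σ' : Matrix (Fin xd) (Fin xd) ℂ := (r0:ℂ) • (σ + ((4:ℝ):ℂ) • PB) with hσ'def
  have hσ'psd : σ'.PosSemidef :=
    psd_smul_real (hσ.1.add (psd_smul_real hPB (by norm_num))) hr0pos.le
  have hσ'tr : σ'.trace = 1 := by
    rw [hσ'def, Matrix.trace_smul, Matrix.trace_add, Matrix.trace_smul, hσ.2, hPBtr,
      smul_eq_mul, smul_eq_mul]
    have : ((r0 : ℝ) : ℂ) * (1 + ((4:ℝ):ℂ) * (a:ℂ)) = ((r0 * (1+4*a) : ℝ) : ℂ) := by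
      push_cast; ring
    rw [this, hr0mul]
    norm_num
  have hσ'd : IsDensity σ' := ⟨hσ'psd, hσ'tr⟩
  set G : Matrix (Fin 2 × Fin xd) (Fin 2 × Fin xd) ℂ :=
    (1 : Matrix (Fin 2) (Fin 2) ℂ) ⊗ₖ PB with hGdef
  set W := (2:ℂ) • G - P with hWdef
  have hW : W.PosSemidef := two_kron_ptraceLeft_sub_psd hP
  set K' : Matrix (Fin 2 × Fin xd) (Fin 2 × Fin xd) ℂ :=
    (1 : Matrix (Fin 2) (Fin 2) ℂ) ⊗ₖ σ' with hK'def
  set S := (1/2 : ℂ) • K' - (r0:ℂ) • τ with hSdef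
  have hK'eq : K' = (r0:ℂ) • (K + ((4:ℝ):ℂ) • G) := by
    rw [hK'def, hσ'def, hKdef, hGdef, Matrix.kronecker_smul, Matrix.kronecker_add,
      Matrix.kronecker_smul]
  have hNeq : N = P - M0 := by rw [hPN]; abel
  have hSeq : S = (r0:ℂ) • (N + W) := by
    rw [hSdef, hK'eq, hNeq, hWdef, hM0def]
    push_cast
    module
  have hS : S.PosSemidef := by rw [hSeq]; exact psd_smul_real (hN.add hW) hr0pos.le
  set η : Matrix (Fin yd) (Fin yd) ℂ := (((yd:ℝ)⁻¹ : ℝ) : ℂ) • (1 : Matrix (Fin yd) (Fin yd) ℂ)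
    with hηdef
  have hηtr : η.trace = 1 := by
    rw [hηdef, Matrix.trace_smul, Matrix.trace_one, smul_eq_mul]
    have hyd : (yd:ℝ) ≠ 0 := Nat.cast_ne_zero.mpr hyd0
    have : (((yd:ℝ)⁻¹ : ℝ) : ℂ) * (Fintype.card (Fin yd) : ℂ)
        = (((yd:ℝ)⁻¹ * (yd:ℝ) : ℝ) : ℂ) := by push_cast; norm_num
    rw [this, inv_mul_cancel₀ hyd]
    norm_num
  have hSη : (S ⊗ₖ η).PosSemidef := by
    rw [hηdef, Matrix.kronecker_smul]
    exact psd_smul_real (kron_one_psd hS) (by positivity)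
  have hSηtr : (S ⊗ₖ η).trace = S.trace := by
    rw [Matrix.trace_kronecker, hηtr, mul_one]
  have hK'tr : K'.trace = 2 := by
    rw [hK'def, Matrix.trace_kronecker, hσ'tr, Matrix.trace_one]
    norm_num
  have hStr : S.trace = 1 - (r0:ℝ) := by
    rw [hSdef, Matrix.trace_sub, Matrix.trace_smul, Matrix.trace_smul, hτtr, hK'tr,
      smul_eq_mul, smul_eq_mul]
    push_cast
    ring
  set ρ' := (r0:ℂ) • ρ + S ⊗ₖ η with hρ'def
  have hρ'psd : ρ'.PosSemidef := (psd_smul_real hρ.1 hr0pos.le).add hSη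
  have hρ'tr : ρ'.trace = 1 := by
    rw [hρ'def, Matrix.trace_add, Matrix.trace_smul, hρ.2, hSηtr, hStr, smul_eq_mul]
    push_cast
    ring
  have hρ'd : IsDensity ρ' := ⟨hρ'psd, hρ'tr⟩
  have hfeas : ((1/2:ℂ) • K' - ptraceRight ρ').PosSemidef := by
    have hpt : ptraceRight ρ' = (r0:ℂ) • τ + S := by
      rw [hρ'def, ptraceRight_add, ptraceRight_smul, ptraceRight_kronecker, hηtr, one_smul,
        hτdef]
    rw [hpt, hSdef]
    have hz : (1/2:ℂ) • K' - ((r0:ℂ) • τ + ((1/2:ℂ) • K' - (r0:ℂ) • τ)) = 0 := by abel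
    rw [hz]
    exact Matrix.PosSemidef.zero
  have hopt' : ip R ρ' ≤ c - Δ/2 := hopt ρ' σ' hρ'd hσ'd hfeas
  have hiple : ip R ρ ≤ 1 := by
    have h := ip_le_trace hR.2 hρ.1
    rw [hρ.2] at h
    simpa using h
  have hipSη : 0 ≤ ip R (S ⊗ₖ η) := ip_nonneg hR.1 hSη
  have hdecomp : ρ = ρ' + (((1 - r0 : ℝ)):ℂ) • ρ - S ⊗ₖ η := by
    rw [hρ'def]
    push_cast
    module
  have hipρ : ip R ρ = ip R ρ' + (1 - r0) * ip R ρ - ip R (S ⊗ₖ η) := by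
    conv_lhs => rw [hdecomp]
    rw [ip_sub', ip_add', ip_smul_real]
  have h1 : (1 - r0) * ip R ρ ≤ 1 - r0 := by
    nlinarith [mul_nonneg (sub_nonneg.mpr hr0le) (sub_nonneg.mpr hiple)]
  have h2 : 1 - r0 ≤ 4*a := by
    nlinarith [mul_nonneg ha0 (sub_nonneg.mpr hr0le)]
  have hkey : ip R ρ ≤ c - Δ/2 + 4*a := by linarith
  have hfin : Δ^2/8 ≤ (c - ip R ρ) + a := by
    nlinarith [mul_nonneg hΔ0.le (sub_nonneg.mpr hΔ1)]
  calc Δ^2/8 ≤ (c - ip R ρ) + a := hfin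
    _ ≤ max (c - ip R ρ) 0 + a := add_le_add_left (le_max_left _ _) a
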